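/- Let M be a prime Γ-ring and J a nonzero left ideal of M. If J is commutative (xαy = yαx for all x,y ∈ J, α ∈ Γ), then M is commutative. -/

import Mathlib

structure GammaRing (M : Type*) (Γ : Type*) [AddCommGroup M] [AddCommGroup Γ] where
  tp : M → Γ → M → M
  add_left : ∀ (x y : M) (α : Γ) (z : M), tp (x + y) α z = tp x α z + tp y α z
  add_mid : ∀ (x : M) (α β : Γ) (z : M), tp x (α + β) z = tp x α z + tp x β z
  add_right : ∀ (x : M) (α : Γ) (y z : M), tp x α (y + z) = tp x α y + tp x α z
  assoc : ∀ (x : M) (α : Γ) (y : M) (β : Γ) (z : M),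
    tp (tp x α y) β z = tp x α (tp y β z)

namespace GammaRing

variable {M Γ : Type*} [AddCommGroup M] [AddCommGroup Γ] (G : GammaRing M Γ)

/-- The commutator `[x,y]_α = xαy - yαx`. -/
def comm (x : M) (α : Γ) (y : M) : M := G.tp x α y - G.tp y α x

/-- The centre `Z(M)`. -/
def center : Set M := {z | ∀ (α : Γ) (y : M), G.tp z α y = G.tp y α z}

/-- `M` is a prime Γ-ring. -/
def IsPrime : Prop :=
  ∀ a b : M, (∀ (x : M) (α β : Γ), G.tp (G.tp a α x) β b = 0) → a = 0 ∨ b = 0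

/-- Assumption (A): `xαyβz = xβyαz`. -/
def AssumptionA : Prop :=
  ∀ (x y z : M) (α β : Γ), G.tp (G.tp x α y) β z = G.tp (G.tp x β y) α z

/-- `D` is a derivation on `M`. -/
def IsDerivation (D : M → M) : Prop :=
  (∀ x y : M, D (x + y) = D x + D y) ∧
    ∀ (x : M) (α : Γ) (y : M), D (G.tp x α y) = G.tp (D x) α y + G.tp x α (D y)

/-- `f` is a generalized derivation with associated derivation `D`. -/
def IsGenDerivation (f D : M → M) : Prop :=
  (∀ x y : M, f (x + y) = f x + f y) ∧
    ∀ (x : M) (α : Γ) (y : M), f (G.tp x α y) = G.tp (f x) α y + G.tp x α (D y)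

/-- `J` is a left ideal. -/
def IsLeftIdeal (J : AddSubgroup M) : Prop :=
  ∀ (m : M) (α : Γ) (j : M), j ∈ J → G.tp m α j ∈ J

/-- `f` is commuting on `J`. -/
def CommutingOn (f : M → M) (J : AddSubgroup M) : Prop :=
  ∀ a ∈ J, ∀ α : Γ, G.comm (f a) α a = 0

/-- `f` is centralizing on `J`. -/
def CentralizingOn (f : M → M) (J : AddSubgroup M) : Prop :=
  ∀ a ∈ J, ∀ α : Γ, G.comm (f a) α a ∈ G.center

/-- `M` is a commutative Γ-ring. -/
def IsCommutative : Prop := ∀ (x : M) (α : Γ) (y : M), G.tp x α y = G.tp y α x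

end GammaRing

theorem stmt_5 {M Γ : Type*} [AddCommGroup M] [AddCommGroup Γ] (G : GammaRing M Γ)
    (hA : G.AssumptionA) (hP : G.IsPrime) (J : AddSubgroup M)
    (hJ : G.IsLeftIdeal J) (hJ0 : J ≠ ⊥)
    (hJcomm : ∀ x ∈ J, ∀ y ∈ J, ∀ α : Γ, G.tp x α y = G.tp y α x) :
    G.IsCommutative := by
  -- basic additivity lemmas
  have tp_zero_left : ∀ (α : Γ) (c : M), G.tp 0 α c = 0 := by
    intro α c
    have h := G.add_left 0 0 α c
    simp only [add_zero] at h
    exact right_eq_add.mp h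
  have tp_sub_left : ∀ (a b : M) (α : Γ) (c : M),
      G.tp (a - b) α c = G.tp a α c - G.tp b α c := by
    intro a b α c
    have h := G.add_left (a - b) b α c
    rw [sub_add_cancel] at h
    rw [eq_sub_iff_add_eq, ← h]
  -- get a nonzero element of J
  obtain ⟨k0, hk0J, hk00⟩ : ∃ k ∈ J, k ≠ 0 := by
    by_contra h
    push_neg at h
    exact hJ0 ((AddSubgroup.eq_bot_iff_forall J).mpr h)
  -- Step I
  have stepI : ∀ j ∈ J, ∀ k ∈ J, ∀ (m : M) (α β : Γ),
      G.tp (G.tp j α m) β k = G.tp (G.tp m α j) β k := by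
    intro j hj k hk m α β
    calc G.tp (G.tp j α m) β k = G.tp j α (G.tp m β k) := G.assoc ..
      _ = G.tp (G.tp m β k) α j := hJcomm _ hj _ (hJ m β k hk) α
      _ = G.tp m β (G.tp k α j) := G.assoc ..
      _ = G.tp m β (G.tp j α k) := by rw [hJcomm _ hk _ hj α]
      _ = G.tp (G.tp m β j) α k := (G.assoc ..).symm
      _ = G.tp (G.tp m α j) β k := hA ..
  -- Step II : jαm = mαj for j ∈ J
  have stepII : ∀ j ∈ J, ∀ (m : M) (α : Γ), G.tp j α m = G.tp m α j := by
    intro j hj m α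
    set c := G.tp j α m - G.tp m α j with hc
    have hzero : ∀ (m' : M) (δ γ : Γ), G.tp (G.tp c δ m') γ k0 = 0 := by
      intro m' δ γ
      have hq : G.tp m' γ k0 ∈ J := hJ m' γ k0 hk0J
      set q := G.tp m' γ k0 with hqdef
      have h1 : G.tp (G.tp (G.tp j α m) δ m') γ k0 = G.tp m δ (G.tp q α j) := by
        calc G.tp (G.tp (G.tp j α m) δ m') γ k0
            = G.tp (G.tp j α m) δ q := G.assoc ..
          _ = G.tp j α (G.tp m δ q) := G.assoc ..
          _ = G.tp (G.tp m δ q) α j := hJcomm _ hj _ (hJ m δ q hq) α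
          _ = G.tp m δ (G.tp q α j) := G.assoc ..
      have h2 : G.tp (G.tp (G.tp m α j) δ m') γ k0 = G.tp m δ (G.tp q α j) := by
        calc G.tp (G.tp (G.tp m α j) δ m') γ k0
            = G.tp (G.tp m α j) δ q := G.assoc ..
          _ = G.tp q δ (G.tp m α j) := (hJcomm _ hq _ (hJ m α j hj) δ).symm
          _ = G.tp (G.tp q δ m) α j := (G.assoc ..).symm
          _ = G.tp (G.tp m δ q) α j := stepI q hq j hj m δ α
          _ = G.tp m δ (G.tp q α j) := G.assoc ..
      rw [hc, tp_sub_left, tp_sub_left, h1, h2, sub_self]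
    have := hP c k0 (fun x δ γ => hzero x δ γ)
    rcases this with h | h
    · exact sub_eq_zero.mp h
    · exact absurd h hk00
  -- final step
  intro x α y
  set c := G.tp x α y - G.tp y α x with hc
  have hcj : ∀ j ∈ J, ∀ γ : Γ, G.tp c γ j = 0 := by
    intro j hj γ
    have h1 : G.tp (G.tp x α y) γ j = G.tp (G.tp y α x) γ j := by
      calc G.tp (G.tp x α y) γ j = G.tp x α (G.tp y γ j) := G.assoc ..
        _ = G.tp (G.tp y γ j) α x := (stepII _ (hJ y γ j hj) x α).symm
        _ = G.tp y γ (G.tp j α x) := G.assoc ..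
        _ = G.tp y γ (G.tp x α j) := by rw [stepII j hj x α]
        _ = G.tp (G.tp y γ x) α j := (G.assoc ..).symm
        _ = G.tp (G.tp y α x) γ j := hA ..
    rw [hc, tp_sub_left, h1, sub_self]
  have hzero : ∀ (m : M) (δ γ : Γ), G.tp (G.tp c δ m) γ k0 = 0 := by
    intro m δ γ
    rw [G.assoc]
    exact hcj _ (hJ m γ k0 hk0J) δ
  rcases hP c k0 hzero with h | h
  · exact sub_eq_zero.mp h
  · exact absurd h hk00
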